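/- arXiv:2207.09987 — 4 statements merged into one kernel-verified Lean document; each statement's English description precedes it below -/
import Mathlib

section
/- Let p_0 ∈ (0,1) and let k, ℓ ≥ 1 be relatively prime integers with p_0 k > (1-p_0) ℓ. Then the polynomial equation p_0 z^{k+ℓ} - z^ℓ + (1 - p_0) = 0 has a unique real solution ν_1 in the open interval (0,1). -/
/-- For `p₀ ∈ (0,1)`, coprime `k, ℓ ≥ 1` with positive drift `p₀ k > (1-p₀) ℓ`,
the equation `p₀ z^{k+ℓ} - z^ℓ + (1-p₀) = 0` has a unique real solution in `(0,1)`. -/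
theorem stmt4 (p0 : ℝ) (hp0 : p0 ∈ Set.Ioo (0 : ℝ) 1) (k l : ℕ) (hk : 1 ≤ k) (hl : 1 ≤ l)
    (hco : Nat.Coprime k l) (hdrift : (1 - p0) * l < p0 * k) :
    ∃! z : ℝ, z ∈ Set.Ioo (0 : ℝ) 1 ∧ p0 * z ^ (k + l) - z ^ l + (1 - p0) = 0 := by
  obtain ⟨hp0l, hp0u⟩ := hp0
  set f : ℝ → ℝ := fun z => p0 * z ^ (k + l) - z ^ l + (1 - p0) with hf
  have hkR : (1:ℝ) ≤ (k:ℝ) := by exact_mod_cast hk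
  have hlR : (1:ℝ) ≤ (l:ℝ) := by exact_mod_cast hl
  have hpkl : (0:ℝ) < p0 * (k + l) := by positivity
  have hlkl : (l:ℝ) < p0 * (k + l) := by nlinarith
  set A : ℝ := (l:ℝ) / (p0 * (k + l)) with hA
  have hA0 : 0 < A := by positivity
  have hA1 : A < 1 := (div_lt_one hpkl).mpr hlkl
  set c : ℝ := A ^ ((k:ℝ)⁻¹) with hc
  have hc0 : 0 < c := Real.rpow_pos_of_pos hA0 _
  have hck : c ^ k = A := Real.rpow_inv_natCast_pow hA0.le (by omega)
  have hc1 : c < 1 := by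
    have := Real.rpow_lt_one hA0.le hA1 (by positivity : (0:ℝ) < (k:ℝ)⁻¹)
    exact this
  have hcont : Continuous f := by fun_prop
  have hd : ∀ z : ℝ, HasDerivAt f (p0 * ((k + l) * z ^ (k + l - 1)) - l * z ^ (l - 1)) z := by
    intro z
    have h1 := ((hasDerivAt_pow (k + l) z).const_mul p0).sub (hasDerivAt_pow l z)
    simpa [hf] using h1.add_const (1 - p0)
  have hsplit : ∀ z : ℝ, p0 * ((k + l) * z ^ (k + l - 1)) - l * z ^ (l - 1)
      = z ^ (l - 1) * (p0 * (k + l) * z ^ k - l) := by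
    intro z
    have : k + l - 1 = (l - 1) + k := by omega
    rw [this, pow_add]; ring
  -- strictly decreasing on [0, c]
  have hanti : StrictAntiOn f (Set.Icc 0 c) := by
    apply strictAntiOn_of_deriv_neg (convex_Icc 0 c) hcont.continuousOn
    intro z hz
    rw [interior_Icc] at hz
    rw [(hd z).deriv, hsplit]
    have hz0 : 0 < z := hz.1
    have hzk : z ^ k < A := by
      rw [← hck]; exact pow_lt_pow_left₀ hz.2 hz0.le (by omega)
    have : p0 * (k + l) * z ^ k - l < 0 := by
      rw [hA, lt_div_iff₀ hpkl] at hzk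
      nlinarith
    have hpw : 0 < z ^ (l - 1) := pow_pos hz0 _
    nlinarith
  -- strictly increasing on [c, 1]
  have hmono : StrictMonoOn f (Set.Icc c 1) := by
    apply strictMonoOn_of_deriv_pos (convex_Icc c 1) hcont.continuousOn
    intro z hz
    rw [interior_Icc] at hz
    rw [(hd z).deriv, hsplit]
    have hz0 : 0 < z := hc0.trans hz.1
    have hzk : A < z ^ k := by
      rw [← hck]; exact pow_lt_pow_left₀ hz.1 hc0.le (by omega)
    have : 0 < p0 * (k + l) * z ^ k - l := by
      rw [hA, div_lt_iff₀ hpkl] at hzk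
      nlinarith
    have hpw : 0 < z ^ (l - 1) := pow_pos hz0 _
    nlinarith
  have hf1 : f 1 = 0 := by simp [hf]
  have hf0 : 0 < f 0 := by
    simp only [hf]
    rw [zero_pow (by omega), zero_pow (by omega)]
    linarith
  have hfc : f c < 0 := by
    have := hmono (Set.mem_Icc.mpr ⟨le_rfl, hc1.le⟩) (Set.mem_Icc.mpr ⟨hc1.le, le_rfl⟩) hc1
    rwa [hf1] at this
  -- existence via IVT on [0, c]
  obtain ⟨z, hzmem, hzval⟩ : ∃ z ∈ Set.Ioo (0:ℝ) c, f z = 0 := by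
    have h := intermediate_value_Ioo' hc0.le hcont.continuousOn
      (Set.mem_Ioo.mpr ⟨hfc, hf0⟩)
    obtain ⟨z, hz, hz0⟩ := h
    exact ⟨z, hz, hz0⟩
  refine ⟨z, ⟨⟨hzmem.1, hzmem.2.trans hc1⟩, hzval⟩, ?_⟩
  rintro y ⟨⟨hy0, hy1⟩, hyval'⟩
  have hyval : f y = 0 := hyval'
  by_cases hyc : y ≤ c
  · exact hanti.injOn (Set.mem_Icc.mpr ⟨hy0.le, hyc⟩)
      (Set.mem_Icc.mpr ⟨hzmem.1.le, hzmem.2.le⟩) (by rw [hyval, hzval] : f y = f z)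
  · exfalso
    push_neg at hyc
    have := hmono (Set.mem_Icc.mpr ⟨hyc.le, hy1.le⟩) (Set.mem_Icc.mpr ⟨hc1.le, le_rfl⟩) hy1
    rw [hf1] at this
    rw [hyval] at this
    exact lt_irrefl 0 this
end

section
/- Let p_0 ∈ (0,1) with p_0 > ℓ/(k+ℓ), where k, ℓ ≥ 1 are relatively prime integers. Then z = 1 is the unique solution on the unit circle {z ∈ ℂ : |z| = 1} of the equation p_0 z^{k+ℓ} - z^ℓ + (1 - p_0) = 0, and it is a simple root. -/
/-- For `p₀ ∈ (ℓ/(k+ℓ),1)` with `k, ℓ ≥ 1` coprime, `z = 1` is the unique root of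
`p₀ z^{k+ℓ} - z^ℓ + (1-p₀) = 0` on the unit circle, and it is a simple root
(the derivative `p₀(k+ℓ)z^{k+ℓ-1} - ℓ z^{ℓ-1}` does not vanish at `z = 1`). -/
theorem stmt5 (p0 : ℝ) (k l : ℕ) (hk : 1 ≤ k) (hl : 1 ≤ l) (hco : Nat.Coprime k l)
    (hp0 : (l : ℝ) / ((k : ℝ) + l) < p0) (hp1 : p0 < 1) :
    (∀ z : ℂ, ‖z‖ = 1 →
        ((p0 : ℂ) * z ^ (k + l) - z ^ l + (1 - (p0 : ℂ)) = 0 ↔ z = 1)) ∧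
      (p0 : ℂ) * ((k : ℂ) + l) * (1 : ℂ) ^ (k + l - 1) - (l : ℂ) * (1 : ℂ) ^ (l - 1) ≠ 0 := by
  have hkl : (0 : ℝ) < (k : ℝ) + l := by positivity
  have hp0pos : 0 < p0 := lt_of_le_of_lt (by positivity) hp0
  have hlkl : (l : ℝ) < p0 * ((k : ℝ) + l) := by
    rw [div_lt_iff₀ hkl] at hp0; linarith
  constructor
  · intro z hz
    constructor
    · intro h
      set u := z ^ (k + l) with hu
      set w := z ^ l with hw
      have hun : ‖u‖ = 1 := by
        rw [hu, norm_pow, hz, one_pow]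
      have hwn : ‖w‖ = 1 := by
        rw [hw, norm_pow, hz, one_pow]
      have hwe : w = (p0 : ℂ) * u + (1 - (p0 : ℂ)) := by linear_combination -h
      have hnsu : u.re * u.re + u.im * u.im = 1 := by
        have := Complex.sq_norm u
        rw [hun, Complex.normSq_apply] at this; linarith [this]
      have hnsw : w.re * w.re + w.im * w.im = 1 := by
        have := Complex.sq_norm w
        rw [hwn, Complex.normSq_apply] at this; linarith [this]
      have hre : w.re = p0 * u.re + (1 - p0) := by
        rw [hwe]; simp [Complex.add_re, Complex.mul_re]
      have him : w.im = p0 * u.im := by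
        rw [hwe]; simp [Complex.add_im, Complex.mul_im]
      have key : 2 * p0 * (1 - p0) * (u.re - 1) = 0 := by
        rw [hre, him] at hnsw; linear_combination hnsw - p0^2 * hnsu
      have hre1 : u.re = 1 := by
        have h1 : 2 * p0 * (1 - p0) ≠ 0 := (mul_pos (by linarith) (by linarith)).ne'
        have := mul_eq_zero.mp key
        rcases this with h' | h'
        · exact absurd h' h1
        · linarith
      have him0 : u.im = 0 := by nlinarith [hnsu, hre1]
      have hu1 : u = 1 := Complex.ext (by simp [hre1]) (by simp [him0])
      have hw1 : w = 1 := by rw [hwe, hu1]; ring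
      have hzk : z ^ k = 1 := by
        have : z ^ k * z ^ l = 1 := by rw [← pow_add]; exact hu1
        rwa [← hw, hw1, mul_one] at this
      have := (pow_gcd_eq_one (a := z) (m := k) (n := l)).mpr ⟨hzk, hw1⟩
      rwa [hco, pow_one] at this
    · intro h; rw [h]; ring
  · simp only [one_pow, mul_one]
    intro h
    have : p0 * ((k : ℝ) + l) - l = 0 := by
      exact_mod_cast by push_cast at h ⊢; exact_mod_cast h
    linarith
end

section
/- Let p_0 ∈ (ℓ/(k+ℓ), 1) with k, ℓ ≥ 1 integers. Define h_0(r) = p_0(r^{k+ℓ} - 1) and h_1(r) = r^ℓ - 1 for r ∈ [0,1]. Then there is a unique r̂ ∈ (0,1) with h_0(r̂) = h_1(r̂); that is, the equation p_0 r^{k+ℓ} - r^ℓ + (1 - p_0) = 0 has exactly one solution r̂ in (0,1). -/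
/-- For `p₀ ∈ (ℓ/(k+ℓ),1)`, with `h₀(r) = p₀(r^{k+ℓ}-1)` and `h₁(r) = r^ℓ - 1`,
there is a unique `r̂ ∈ (0,1)` with `h₀(r̂) = h₁(r̂)`. -/
theorem stmt6 (p0 : ℝ) (k l : ℕ) (hk : 1 ≤ k) (hl : 1 ≤ l)
    (hp0 : (l : ℝ) / ((k : ℝ) + l) < p0) (hp1 : p0 < 1) :
    ∃! r : ℝ, r ∈ Set.Ioo (0 : ℝ) 1 ∧ p0 * (r ^ (k + l) - 1) = r ^ l - 1 := by
  set g : ℝ → ℝ := fun x => p0 * x ^ (k + l) - x ^ l + (1 - p0) with hg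
  have hkl : (0:ℝ) < (k:ℝ) + l := by positivity
  have hlpos : (0:ℝ) < (l:ℝ) := by exact_mod_cast hl
  have hp0pos : 0 < p0 := lt_trans (by positivity) hp0
  have hA : 0 < p0 * ((k:ℝ) + l) := by positivity
  have hlA : (l:ℝ) < p0 * ((k:ℝ) + l) := (div_lt_iff₀ hkl).mp hp0
  set x0 : ℝ := (l:ℝ) / (p0 * ((k:ℝ) + l)) with hx0def
  have hx0 : 0 < x0 := by positivity
  have hx01 : x0 < 1 := (div_lt_one hA).mpr hlA
  set c : ℝ := x0 ^ ((k:ℝ)⁻¹) with hcdef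
  have hc0 : 0 < c := Real.rpow_pos_of_pos hx0 _
  have hkne : (k:ℝ) ≠ 0 := by positivity
  have hck : c ^ k = x0 := by
    rw [hcdef, ← Real.rpow_natCast (x0 ^ ((k:ℝ)⁻¹)) k, ← Real.rpow_mul hx0.le,
      inv_mul_cancel₀ hkne, Real.rpow_one]
  have hc1 : c < 1 := Real.rpow_lt_one hx0.le hx01 (by positivity)
  have hcont : Continuous g := by fun_prop
  have hder : ∀ x : ℝ, HasDerivAt g (x ^ (l-1) * (p0 * ((k:ℝ)+l) * x ^ k - l)) x := by
    intro x
    have h1 := ((hasDerivAt_pow (k+l) x).const_mul p0).sub (hasDerivAt_pow l x)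
    have h2 := h1.add_const (1 - p0)
    convert h2 using 1
    · rfl
    · rfl
    · rfl
    have hkl1 : k + l - 1 = k + (l - 1) := by omega
    rw [hkl1, pow_add]
    push_cast [Nat.cast_sub hl]
    ring
  have hanti : StrictAntiOn g (Set.Icc 0 c) := by
    apply strictAntiOn_of_deriv_neg (convex_Icc 0 c) hcont.continuousOn
    intro x hx
    rw [interior_Icc] at hx
    rw [(hder x).deriv]
    have h1 : x ^ k < x0 := by
      rw [← hck]; exact pow_lt_pow_left₀ hx.2 hx.1.le (by omega)
    have h2 : p0 * ((k:ℝ)+l) * x ^ k < (l:ℝ) := by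
      have := mul_lt_mul_of_pos_left h1 hA
      rw [hx0def, mul_div_cancel₀ _ hA.ne'] at this
      linarith
    exact mul_neg_of_pos_of_neg (pow_pos hx.1 _) (by linarith)
  have hmono : StrictMonoOn g (Set.Icc c 1) := by
    apply strictMonoOn_of_deriv_pos (convex_Icc c 1) hcont.continuousOn
    intro x hx
    rw [interior_Icc] at hx
    rw [(hder x).deriv]
    have hxpos : 0 < x := lt_trans hc0 hx.1
    have h1 : x0 < x ^ k := by
      rw [← hck]; exact pow_lt_pow_left₀ hx.1 hc0.le (by omega)
    have h2 : (l:ℝ) < p0 * ((k:ℝ)+l) * x ^ k := by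
      have := mul_lt_mul_of_pos_left h1 hA
      rw [hx0def, mul_div_cancel₀ _ hA.ne'] at this
      linarith
    exact mul_pos (pow_pos hxpos _) (by linarith)
  have hg0 : g 0 = 1 - p0 := by
    simp [hg, zero_pow (by omega : k + l ≠ 0), zero_pow (by omega : l ≠ 0)]
  have hg1 : g 1 = 0 := by simp [hg]
  have hgc : g c < 0 := by
    have := hmono ⟨le_refl c, hc1.le⟩ ⟨hc1.le, le_refl 1⟩ hc1
    rwa [hg1] at this
  -- existence of a root in (0, c)
  have hiv := intermediate_value_Ioo' hc0.le hcont.continuousOn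
  have h0mem : (0:ℝ) ∈ Set.Ioo (g c) (g 0) := by
    constructor
    · exact hgc
    · rw [hg0]; linarith
  obtain ⟨r, hrmem, hgr⟩ := hiv h0mem
  -- any root in (0,1) lies in (0,c)
  have key : ∀ y : ℝ, y ∈ Set.Ioo (0:ℝ) 1 → g y = 0 → y < c := by
    intro y hy hgy
    by_contra h
    push_neg at h
    have := hmono ⟨h, hy.2.le⟩ ⟨hc1.le, le_refl 1⟩ hy.2
    rw [hg1, hgy] at this
    exact lt_irrefl 0 this
  have heq : ∀ y : ℝ, (y ∈ Set.Ioo (0:ℝ) 1 ∧ p0 * (y ^ (k + l) - 1) = y ^ l - 1) ↔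
      (y ∈ Set.Ioo (0:ℝ) 1 ∧ g y = 0) := by
    intro y
    constructor <;> rintro ⟨h1, h2⟩ <;> refine ⟨h1, ?_⟩ <;> simp only [hg] at * <;> nlinarith
  refine ⟨r, ?_, ?_⟩
  · exact (heq r).mpr ⟨⟨hrmem.1, lt_trans hrmem.2 hc1⟩, hgr⟩
  · intro y hy
    obtain ⟨hy1, hy2⟩ := (heq y).mp hy
    have hyc : y < c := key y hy1 hy2
    have hrc : r < c := hrmem.2
    exact hanti.injOn ⟨hy1.1.le, hyc.le⟩ ⟨hrmem.1.le, hrc.le⟩ (by rw [hy2, hgr])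
end

section
/- Let p_0 ∈ (0,1) and k, ℓ ≥ 1 coprime integers with p_0 > ℓ/(k+ℓ), and let ν_1 ∈ (0,1) be the unique real root of p_0 z^{k+ℓ} - z^ℓ + (1-p_0) = 0 in (0,1). Then every other complex root w of p_0 z^{k+ℓ} - z^ℓ + (1-p_0) = 0 with |w| < 1 satisfies |w| < ν_1; that is, ν_1 is a simple root and is the root of strictly largest modulus among all roots inside the open unit disk. -/
open Finset

/-- Cross inequality: higher-power block vs lower-power block. -/
lemma stmt17_cross (k l : ℕ) (hk : 1 ≤ k) (hl : 1 ≤ l) {a b : ℝ}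
    (ha : 0 < a) (hab : a < b) :
    (a ^ l * ∑ i ∈ range k, a ^ i) * ∑ j ∈ range l, b ^ j <
    (b ^ l * ∑ i ∈ range k, b ^ i) * ∑ j ∈ range l, a ^ j := by
  have hb : 0 < b := ha.trans hab
  have e1 : a ^ l * ∑ i ∈ range k, a ^ i = ∑ i ∈ range k, a ^ (l + i) := by
    rw [Finset.mul_sum]; exact Finset.sum_congr rfl fun i _ => (pow_add a l i).symm
  have e2 : b ^ l * ∑ i ∈ range k, b ^ i = ∑ i ∈ range k, b ^ (l + i) := by
    rw [Finset.mul_sum]; exact Finset.sum_congr rfl fun i _ => (pow_add b l i).symm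
  rw [e1, e2, Finset.sum_mul_sum, Finset.sum_mul_sum]
  apply Finset.sum_lt_sum_of_nonempty (by simp; omega)
  intro i _
  apply Finset.sum_lt_sum_of_nonempty (by simp; omega)
  intro j hj
  have hjl : j < l := Finset.mem_range.mp hj
  have e : l + i = j + (l + i - j) := by omega
  rw [e, pow_add, pow_add]
  have h1 : a ^ (l + i - j) < b ^ (l + i - j) :=
    pow_lt_pow_left₀ hab ha.le (by omega)
  have h2 : (0:ℝ) < a ^ j := pow_pos ha j
  have h3 : (0:ℝ) < b ^ j := pow_pos hb j
  calc a ^ j * a ^ (l + i - j) * b ^ j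
      < a ^ j * b ^ (l + i - j) * b ^ j := by
        apply mul_lt_mul_of_pos_right _ h3
        exact mul_lt_mul_of_pos_left h1 h2
    _ = b ^ j * b ^ (l + i - j) * a ^ j := by ring

lemma stmt17_geom (x : ℝ) (n : ℕ) : (1 - x) * ∑ i ∈ range n, x ^ i = 1 - x ^ n := by
  linear_combination -(geom_sum_mul x n)

/-- balance relation at a root in (0,1) -/
lemma stmt17_balance (p0 : ℝ) (k l : ℕ) (x : ℝ) (_h0 : 0 < x) (h1 : x < 1)
    (hroot : p0 * x ^ (k + l) - x ^ l + (1 - p0) = 0) :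
    (1 - p0) * ∑ j ∈ range l, x ^ j = p0 * (x ^ l * ∑ i ∈ range k, x ^ i) := by
  have hS := stmt17_geom x l
  have hU := stmt17_geom x k
  have hx1 : (1:ℝ) - x ≠ 0 := by linarith
  have hkl : x ^ (k + l) = x ^ k * x ^ l := pow_add x k l ▸ by ring
  have key : (1 - x) * ((1 - p0) * ∑ j ∈ range l, x ^ j
      - p0 * (x ^ l * ∑ i ∈ range k, x ^ i)) = 0 := by
    linear_combination (1 - p0) * hS - p0 * x ^ l * hU + hroot - p0 * hkl
  rcases mul_eq_zero.mp key with h | h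
  · exact absurd h hx1
  · linarith

/-- main real inequality: f(r) < 0 for ν1 < r < 1. -/
lemma stmt17_fneg (p0 : ℝ) (k l : ℕ) (hk : 1 ≤ k) (hl : 1 ≤ l)
    (hp0 : 0 < p0) (ν1 : ℝ) (h0 : 0 < ν1) (h1 : ν1 < 1)
    (hroot : p0 * ν1 ^ (k + l) - ν1 ^ l + (1 - p0) = 0)
    (r : ℝ) (hr1 : ν1 < r) (hr2 : r < 1) :
    p0 * r ^ (k + l) + (1 - p0) < r ^ l := by
  have hbal := stmt17_balance p0 k l ν1 h0 h1 hroot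
  have hcross := stmt17_cross k l hk hl h0 hr1
  have hSν : (0:ℝ) < ∑ j ∈ range l, ν1 ^ j :=
    Finset.sum_pos (fun j _ => pow_pos h0 j) (by simp; omega)
  have hmain : (1 - p0) * ∑ j ∈ range l, r ^ j < p0 * (r ^ l * ∑ i ∈ range k, r ^ i) := by
    have h := mul_lt_mul_of_pos_left hcross hp0
    rw [← mul_lt_mul_iff_left₀ hSν]
    calc (1 - p0) * (∑ j ∈ range l, r ^ j) * (∑ j ∈ range l, ν1 ^ j)
        = ((1 - p0) * ∑ j ∈ range l, ν1 ^ j) * (∑ j ∈ range l, r ^ j) := by ring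
      _ = (p0 * (ν1 ^ l * ∑ i ∈ range k, ν1 ^ i)) * (∑ j ∈ range l, r ^ j) := by rw [hbal]
      _ < (p0 * (r ^ l * ∑ i ∈ range k, r ^ i)) * (∑ j ∈ range l, ν1 ^ j) := by
          calc (p0 * (ν1 ^ l * ∑ i ∈ range k, ν1 ^ i)) * (∑ j ∈ range l, r ^ j)
              = p0 * ((ν1 ^ l * ∑ i ∈ range k, ν1 ^ i) * ∑ j ∈ range l, r ^ j) := by ring
            _ < p0 * ((r ^ l * ∑ i ∈ range k, r ^ i) * ∑ j ∈ range l, ν1 ^ j) := h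
            _ = (p0 * (r ^ l * ∑ i ∈ range k, r ^ i)) * (∑ j ∈ range l, ν1 ^ j) := by ring
  have hSr := stmt17_geom r l
  have hUr := stmt17_geom r k
  have hklr : r ^ (k + l) = r ^ k * r ^ l := pow_add r k l ▸ by ring
  have hid : p0 * r ^ (k + l) + (1 - p0) - r ^ l
      = (1 - r) * ((1 - p0) * ∑ j ∈ range l, r ^ j
          - p0 * (r ^ l * ∑ i ∈ range k, r ^ i)) := by
    linear_combination -(1 - p0) * hSr + p0 * r ^ l * hUr + p0 * hklr
  nlinarith [mul_pos (show (0:ℝ) < 1 - r by linarith)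
    (show (0:ℝ) < p0 * (r ^ l * ∑ i ∈ range k, r ^ i) - (1 - p0) * ∑ j ∈ range l, r ^ j by linarith)]

/-- the derivative at ν1 is negative -/
lemma stmt17_deriv (p0 : ℝ) (k l : ℕ) (hk : 1 ≤ k) (hl : 1 ≤ l)
    (hp0 : 0 < p0) (ν1 : ℝ) (h0 : 0 < ν1) (h1 : ν1 < 1)
    (hroot : p0 * ν1 ^ (k + l) - ν1 ^ l + (1 - p0) = 0) :
    p0 * ((k:ℝ) + l) * ν1 ^ (k + l - 1) - (l:ℝ) * ν1 ^ (l - 1) < 0 := by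
  have hbal := stmt17_balance p0 k l ν1 h0 h1 hroot
  have hS_le : (∑ j ∈ range l, ν1 ^ j) ≤ (l:ℝ) := by
    calc (∑ j ∈ range l, ν1 ^ j) ≤ ∑ _j ∈ range l, (1:ℝ) :=
          Finset.sum_le_sum fun j _ => pow_le_one₀ h0.le h1.le
      _ = l := by simp
  have hSpos : (0:ℝ) < ∑ j ∈ range l, ν1 ^ j :=
    Finset.sum_pos (fun j _ => pow_pos h0 j) (by simp; omega)
  have hU_ge : (k:ℝ) * ν1 ^ (k - 1) ≤ ∑ i ∈ range k, ν1 ^ i := by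
    calc (k:ℝ) * ν1 ^ (k - 1) = ∑ _i ∈ range k, ν1 ^ (k - 1) := by
          simp [mul_comm]
      _ ≤ ∑ i ∈ range k, ν1 ^ i := Finset.sum_le_sum fun i hi =>
          pow_le_pow_of_le_one h0.le h1.le (by have := Finset.mem_range.mp hi; omega)
  have hT_ge : (k:ℝ) * ν1 ^ (k + l - 1) ≤ ν1 ^ l * ∑ i ∈ range k, ν1 ^ i := by
    have e : ν1 ^ l * ν1 ^ (k - 1) = ν1 ^ (k + l - 1) := by
      rw [← pow_add]; congr 1; omega
    calc (k:ℝ) * ν1 ^ (k + l - 1) = ν1 ^ l * ((k:ℝ) * ν1 ^ (k - 1)) := by rw [← e]; ring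
      _ ≤ ν1 ^ l * ∑ i ∈ range k, ν1 ^ i :=
          mul_le_mul_of_nonneg_left hU_ge (pow_nonneg h0.le l)
  have hsucc : ν1 ^ (k + l) = ν1 ^ (k + l - 1) * ν1 := by
    rw [← pow_succ]; congr 1; omega
  have hsl : ν1 ^ l = ν1 ^ (l - 1) * ν1 := by
    rw [← pow_succ]; congr 1; omega
  have hk0 : (0:ℝ) < k := by exact_mod_cast hk
  have hl0 : (0:ℝ) < l := by exact_mod_cast hl
  have hstep : (k:ℝ) * ν1 ^ (k + l) * (∑ j ∈ range l, ν1 ^ j)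
      < (l:ℝ) * (ν1 ^ l * ∑ i ∈ range k, ν1 ^ i) := by
    have hkl1 : ν1 ^ (k + l) < ν1 ^ (k + l - 1) := by
      nlinarith [pow_pos h0 (k + l - 1)]
    calc (k:ℝ) * ν1 ^ (k + l) * (∑ j ∈ range l, ν1 ^ j)
        ≤ (k:ℝ) * ν1 ^ (k + l) * l :=
          mul_le_mul_of_nonneg_left hS_le (by positivity)
      _ = (l:ℝ) * ((k:ℝ) * ν1 ^ (k + l)) := by ring
      _ < (l:ℝ) * ((k:ℝ) * ν1 ^ (k + l - 1)) := by
          nlinarith [mul_lt_mul_of_pos_left hkl1 (mul_pos hl0 hk0)]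
      _ ≤ (l:ℝ) * (ν1 ^ l * ∑ i ∈ range k, ν1 ^ i) :=
          mul_le_mul_of_nonneg_left hT_ge hl0.le
  have key : p0 * (k:ℝ) * ν1 ^ (k + l) < (l:ℝ) * (1 - p0) := by
    rw [← mul_lt_mul_iff_left₀ hSpos]
    calc p0 * (k:ℝ) * ν1 ^ (k + l) * (∑ j ∈ range l, ν1 ^ j)
        = p0 * ((k:ℝ) * ν1 ^ (k + l) * (∑ j ∈ range l, ν1 ^ j)) := by ring
      _ < p0 * ((l:ℝ) * (ν1 ^ l * ∑ i ∈ range k, ν1 ^ i)) :=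
          mul_lt_mul_of_pos_left hstep hp0
      _ = (l:ℝ) * (p0 * (ν1 ^ l * ∑ i ∈ range k, ν1 ^ i)) := by ring
      _ = (l:ℝ) * ((1 - p0) * (∑ j ∈ range l, ν1 ^ j)) := by rw [← hbal]
      _ = (l:ℝ) * (1 - p0) * (∑ j ∈ range l, ν1 ^ j) := by ring
  have hrl : (l:ℝ) * (p0 * ν1 ^ (k + l) - ν1 ^ l + (1 - p0)) = 0 := by rw [hroot]; ring
  have hmain : p0 * ((k:ℝ) + l) * ν1 ^ (k + l) - (l:ℝ) * ν1 ^ l < 0 := by nlinarith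
  have efin : (p0 * ((k:ℝ) + l) * ν1 ^ (k + l - 1) - (l:ℝ) * ν1 ^ (l - 1)) * ν1
      = p0 * ((k:ℝ) + l) * ν1 ^ (k + l) - (l:ℝ) * ν1 ^ l := by
    rw [hsucc, hsl]; ring
  have final : (p0 * ((k:ℝ) + l) * ν1 ^ (k + l - 1) - (l:ℝ) * ν1 ^ (l - 1)) * ν1 < 0 := by
    rw [efin]; exact hmain
  nlinarith [final, h0]

/-- The root `ν₁ ∈ (0,1)` of `p₀z^{k+ℓ} - z^ℓ + (1-p₀) = 0` is simple and has
strictly largest modulus among all complex roots in the open unit disk. -/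
theorem stmt17 (p0 : ℝ) (k l : ℕ) (hk : 1 ≤ k) (hl : 1 ≤ l) (hco : Nat.Coprime k l)
    (hp0 : (l : ℝ) / ((k : ℝ) + l) < p0) (hp1 : p0 < 1)
    (ν1 : ℝ) (hν1 : ν1 ∈ Set.Ioo (0 : ℝ) 1)
    (hroot : p0 * ν1 ^ (k + l) - ν1 ^ l + (1 - p0) = 0) :
    (∀ w : ℂ, ‖w‖ < 1 →
        (p0 : ℂ) * w ^ (k + l) - w ^ l + (1 - (p0 : ℂ)) = 0 → w ≠ (ν1 : ℂ) →
          ‖w‖ < ν1) ∧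
      p0 * ((k : ℝ) + l) * ν1 ^ (k + l - 1) - (l : ℝ) * ν1 ^ (l - 1) ≠ 0 := by
  obtain ⟨h0, h1⟩ := hν1
  have hl0 : (0:ℝ) < l := by exact_mod_cast hl
  have hk0 : (0:ℝ) ≤ k := Nat.cast_nonneg k
  have hp0pos : 0 < p0 := lt_trans (div_pos hl0 (by linarith)) hp0
  constructor
  · intro w hw1 hwe hwne
    by_contra hcon
    push_neg at hcon
    have hweq : w ^ l = (p0:ℂ) * w ^ (k + l) + ((1 - p0 : ℝ) : ℂ) := by
      push_cast; linear_combination -hwe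
    rcases lt_or_eq_of_le hcon with hlt | heq
    · -- ν1 < |w| < 1 : impossible
      have hf := stmt17_fneg p0 k l hk hl hp0pos ν1 h0 h1 hroot ‖w‖ hlt hw1
      have habs : ‖w‖ ^ l ≤ p0 * ‖w‖ ^ (k + l) + (1 - p0) := by
        have h := congrArg (‖·‖) hweq
        rw [norm_pow] at h
        refine h.le.trans ?_
        refine le_trans (norm_add_le _ _) ?_
        rw [norm_mul, norm_pow, Complex.norm_real, Complex.norm_real, Real.norm_eq_abs,
          Real.norm_eq_abs, abs_of_pos hp0pos, abs_of_pos (by linarith : (0:ℝ) < 1 - p0)]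
      linarith
    · -- |w| = ν1 : forces w = ν1
      have hreq : ‖w‖ = ν1 := heq.symm
      have hrootν : ν1 ^ l = p0 * ν1 ^ (k + l) + (1 - p0) := by linarith
      have h1' : ‖(p0:ℂ) * w ^ (k + l)‖ = p0 * ν1 ^ (k + l) := by
        rw [norm_mul, norm_pow, Complex.norm_real, Real.norm_eq_abs, abs_of_pos hp0pos, hreq]
      have h2' : ‖(((1 - p0 : ℝ) : ℂ))‖ = 1 - p0 := by
        rw [Complex.norm_real, Real.norm_eq_abs, abs_of_pos (by linarith : (0:ℝ) < 1 - p0)]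
      have habs_eq : ‖(p0:ℂ) * w ^ (k + l) + ((1 - p0 : ℝ) : ℂ)‖
          = ‖(p0:ℂ) * w ^ (k + l)‖ + ‖(((1 - p0 : ℝ) : ℂ))‖ := by
        rw [← hweq, norm_pow, hreq, h1', h2', hrootν]
      have hsr : SameRay ℝ ((p0:ℂ) * w ^ (k + l)) (((1 - p0 : ℝ) : ℂ)) := by
        rw [sameRay_iff_norm_add]
        simpa using habs_eq
      have hb_ne : (((1 - p0 : ℝ) : ℂ)) ≠ 0 := by
        simp only [ne_eq, Complex.ofReal_eq_zero]; linarith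
      obtain ⟨t, ht0, hts⟩ := hsr.exists_nonneg_right hb_ne
      have hw0 : w ≠ 0 := by
        intro h; rw [h, norm_zero] at hreq; linarith
      have hwkl : w ^ (k + l) = ((ν1 ^ (k + l) : ℝ) : ℂ) := by
        have hp0c : (p0 : ℂ) ≠ 0 := by exact_mod_cast hp0pos.ne'
        have hform : w ^ (k + l) = ((t * (1 - p0) / p0 : ℝ) : ℂ) := by
          have hts' : (p0:ℂ) * w ^ (k + l) = (t:ℂ) * ((1 - p0 : ℝ) : ℂ) := by
            rw [hts, Complex.real_smul]
          rw [Complex.ofReal_div, Complex.ofReal_mul, Complex.ofReal_sub,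
            Complex.ofReal_one, eq_div_iff hp0c]
          push_cast at hts' ⊢
          linear_combination hts'
        have habs' : ‖w ^ (k + l)‖ = ν1 ^ (k + l) := by
          rw [norm_pow, hreq]
        have hs0 : 0 ≤ t * (1 - p0) / p0 :=
          div_nonneg (mul_nonneg ht0 (by linarith)) hp0pos.le
        rw [hform, Complex.norm_real, Real.norm_eq_abs, abs_of_nonneg hs0] at habs'
        rw [hform, habs']
      have hwl : w ^ l = ((ν1 ^ l : ℝ) : ℂ) := by
        rw [hweq, hwkl]
        push_cast
        exact_mod_cast congrArg (fun x : ℝ => (x : ℂ)) hrootν.symm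
      have hνl_ne : ((ν1 ^ l : ℝ) : ℂ) ≠ 0 := by
        exact_mod_cast (pow_pos h0 l).ne'
      have hwk : w ^ k = ((ν1 ^ k : ℝ) : ℂ) := by
        have hkk : w ^ k * w ^ l = ((ν1 ^ k : ℝ) : ℂ) * ((ν1 ^ l : ℝ) : ℂ) := by
          rw [← pow_add, hwkl]; push_cast; rw [← pow_add]
        rw [hwl] at hkk
        exact mul_right_cancel₀ hνl_ne hkk
      -- Bezout
      have hg := Nat.gcd_eq_gcd_ab k l
      rw [Nat.Coprime.gcd_eq_one hco] at hg
      set a := Nat.gcdA k l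
      set b := Nat.gcdB k l
      have hone : (k:ℤ) * a + (l:ℤ) * b = 1 := by push_cast at hg; linarith
      have hν0 : ((ν1:ℝ):ℂ) ≠ 0 := by exact_mod_cast h0.ne'
      have hW : w = (ν1 : ℂ) := by
        have e1 : w ^ ((k:ℤ) * a + (l:ℤ) * b) = ((ν1:ℂ)) ^ ((k:ℤ) * a + (l:ℤ) * b) := by
          rw [zpow_add₀ hw0, zpow_add₀ hν0, zpow_mul, zpow_mul, zpow_mul, zpow_mul,
            zpow_natCast, zpow_natCast, zpow_natCast, zpow_natCast, hwk, hwl]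
          norm_cast
        rw [hone, zpow_one, zpow_one] at e1
        exact e1
      exact hwne hW
  · exact ne_of_lt (stmt17_deriv p0 k l hk hl hp0pos ν1 h0 h1 hroot)
end
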